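/- For every n ≥ 0, ∑_{Y ⊢ n+3} binom(d(Y),2) · q^{(n+2)−ℓ(Y)} = f_n(q) as polynomials in q, where the sum runs over all Young diagrams Y with n+3 boxes and binom(d(Y),2) counts the 2-element sets of removable boxes of Y. (This is the coefficient form of Nakajima–Yoshioka's generating function for the Poincaré polynomials of the spaces Hilb^{n+1,n+3}(0)_{tr}.) -/

import Mathlib

/-!
Statement 17: Σ_{Y ⊢ n+3} C(d(Y),2)·q^{(n+2)−ℓ(Y)} = f_n(q), where d(Y) is the number of
removable boxes of Y and f_n(q) = Σ_{a+2b+|ν|=n} q^{n−ℓ(ν)} (the coefficient form of the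
Nakajima–Yoshioka generating function for the Poincaré polynomials of
Hilb^{n+1,n+3}(0)_{tr}).
-/

open Polynomial

/-- The number of nonempty columns of a Young diagram. -/
def ell (Γ : YoungDiagram) : ℕ := (Γ.cells.filter fun c => c.2 = 0).card

/-- The number of removable boxes of a Young diagram: the boxes whose removal leaves a
Young diagram. -/
noncomputable def removableCount (Y : YoungDiagram) : ℕ :=
  Set.ncard {c : ℕ × ℕ | c ∈ Y ∧ IsLowerSet (↑(Y.cells.erase c) : Set (ℕ × ℕ))}

/-- `f_n(q) = Σ q^{n−ℓ(ν)}`, summed over all triples `(a,b,ν)` with `a + 2b + |ν| = n`;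
this is the coefficient of `z^n` in `(1/((1−zq)(1−z²q²)))·∏_{k≥1} 1/(1−z^k q^{k−1})`. -/
noncomputable def fPoly (n : ℕ) : Polynomial ℤ :=
  ∑ p ∈ ((Finset.range (n + 1)) ×ˢ (Finset.range (n + 1))).filter
      (fun p => p.1 + 2 * p.2 ≤ n),
    ∑ ν : Nat.Partition (n - p.1 - 2 * p.2), (X : Polynomial ℤ) ^ (n - ν.parts.card)

namespace S17

open Finset YoungDiagram

/-- Removable cells as a finset. -/
def remCells (Y : YoungDiagram) : Finset (ℕ × ℕ) :=
  Y.cells.filter fun c => (c.1 + 1, c.2) ∉ Y ∧ (c.1, c.2 + 1) ∉ Y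

lemma mem_remCells {Y : YoungDiagram} {c : ℕ × ℕ} :
    c ∈ remCells Y ↔ c ∈ Y ∧ (c.1 + 1, c.2) ∉ Y ∧ (c.1, c.2 + 1) ∉ Y := by
  simp [remCells, YoungDiagram.mem_cells]

lemma removable_iff {Y : YoungDiagram} {c : ℕ × ℕ} :
    (c ∈ Y ∧ IsLowerSet (↑(Y.cells.erase c) : Set (ℕ × ℕ))) ↔ c ∈ remCells Y := by
  rw [mem_remCells]
  constructor
  · rintro ⟨hc, H⟩
    refine ⟨hc, fun h1 => ?_, fun h2 => ?_⟩
    · have hmem : ((c.1 + 1, c.2) : ℕ × ℕ) ∈ (↑(Y.cells.erase c) : Set (ℕ × ℕ)) := by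
        simp only [Finset.coe_erase, Set.mem_diff, Finset.mem_coe, YoungDiagram.mem_cells,
          Set.mem_singleton_iff]
        exact ⟨h1, by simp [Prod.ext_iff]⟩
      have := H (show c ≤ (c.1 + 1, c.2) from ⟨Nat.le_succ _, le_refl _⟩) hmem
      exact absurd (Finset.mem_coe.1 this) (Finset.notMem_erase c _)
    · have hmem : ((c.1, c.2 + 1) : ℕ × ℕ) ∈ (↑(Y.cells.erase c) : Set (ℕ × ℕ)) := by
        simp only [Finset.coe_erase, Set.mem_diff, Finset.mem_coe, YoungDiagram.mem_cells,
          Set.mem_singleton_iff]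
        exact ⟨h2, by simp [Prod.ext_iff]⟩
      have := H (show c ≤ (c.1, c.2 + 1) from ⟨le_refl _, Nat.le_succ _⟩) hmem
      exact absurd (Finset.mem_coe.1 this) (Finset.notMem_erase c _)
  · rintro ⟨hc, h1, h2⟩
    refine ⟨hc, ?_⟩
    intro x y hyx hx
    simp only [Finset.coe_erase, Set.mem_diff, Finset.mem_coe, YoungDiagram.mem_cells,
      Set.mem_singleton_iff] at hx ⊢
    refine ⟨Y.isLowerSet hyx hx.1, ?_⟩
    rintro rfl
    have hle1 : y.1 ≤ x.1 := hyx.1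
    have hle2 : y.2 ≤ x.2 := hyx.2
    have hne : y ≠ x := fun h => hx.2 h.symm
    rcases Nat.lt_or_ge y.1 x.1 with h | h
    · exact h1 (Y.up_left_mem h hle2 (show (x.1, x.2) ∈ Y from hx.1))
    · have h1eq : y.1 = x.1 := le_antisymm hle1 h
      have h2lt : y.2 < x.2 := by
        rcases Nat.lt_or_ge y.2 x.2 with h' | h'
        · exact h'
        · exact absurd (Prod.ext h1eq (le_antisymm hle2 h')) hne
      exact h2 (Y.up_left_mem (le_of_eq h1eq) h2lt (show (x.1, x.2) ∈ Y from hx.1))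

lemma removableCount_eq_card (Y : YoungDiagram) : removableCount Y = (remCells Y).card := by
  rw [removableCount, show {c : ℕ × ℕ | c ∈ Y ∧ IsLowerSet (↑(Y.cells.erase c) : Set (ℕ × ℕ))}
      = ↑(remCells Y) from Set.ext fun c => removable_iff.trans (Finset.mem_coe).symm,
    Set.ncard_coe_finset]

lemma ell_eq (Y : YoungDiagram) : ell Y = Y.colLen 0 := by
  rw [ell, YoungDiagram.colLen_eq_card]
  rfl

lemma card_eq_sum_rowLens' (Y : YoungDiagram) : Y.card = Y.rowLens.sum := by
  have hcells : Y.cells = (Finset.range (Y.colLen 0)).biUnion Y.row := by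
    ext c
    simp only [Finset.mem_biUnion, Finset.mem_range, YoungDiagram.mem_row_iff,
      YoungDiagram.mem_cells]
    constructor
    · intro hc
      refine ⟨c.1, ?_, hc, rfl⟩
      rw [← YoungDiagram.mem_iff_lt_colLen]
      exact Y.up_left_mem le_rfl (Nat.zero_le _) (show (c.1, c.2) ∈ Y from hc)
    · rintro ⟨i, _, hc, rfl⟩; exact hc
  have hdisj : ∀ i ∈ Finset.range (Y.colLen 0), ∀ j ∈ Finset.range (Y.colLen 0), i ≠ j →
      Disjoint (Y.row i) (Y.row j) := by
    intro i _ j _ hij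
    refine Finset.disjoint_left.2 fun c hci hcj => hij ?_
    rw [← (YoungDiagram.mem_row_iff.1 hci).2, ← (YoungDiagram.mem_row_iff.1 hcj).2]
  rw [YoungDiagram.card, hcells, Finset.card_biUnion hdisj, YoungDiagram.rowLens]
  rw [show (List.map Y.rowLen (List.range (Y.colLen 0))).sum
      = ∑ i ∈ Finset.range (Y.colLen 0), Y.rowLen i from rfl]
  exact Finset.sum_congr rfl fun i _ => (Y.rowLen_eq_card).symm

lemma removableCount_eq (Y : YoungDiagram) :
    removableCount Y = Y.rowLens.toFinset.card := by
  rw [removableCount_eq_card]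
  apply Finset.card_bij (fun c _ => c.2 + 1)
  · intro c hc
    rw [mem_remCells] at hc
    obtain ⟨hc0, h1, h2⟩ := hc
    rw [List.mem_toFinset, YoungDiagram.rowLens, List.mem_map]
    refine ⟨c.1, ?_, ?_⟩
    · rw [List.mem_range, ← YoungDiagram.mem_iff_lt_colLen]
      exact Y.up_left_mem le_rfl (Nat.zero_le _) (show (c.1, c.2) ∈ Y from hc0)
    · have hlt : c.2 < Y.rowLen c.1 := YoungDiagram.mem_iff_lt_rowLen.1 hc0
      have hle : ¬ (c.2 + 1 < Y.rowLen c.1) := fun h =>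
        h2 (YoungDiagram.mem_iff_lt_rowLen.2 h)
      omega
  · intro a ha b hb hab
    rw [mem_remCells] at ha hb
    obtain ⟨ha0, ha1, _⟩ := ha
    obtain ⟨hb0, hb1, _⟩ := hb
    have h2 : a.2 = b.2 := by omega
    rcases lt_trichotomy a.1 b.1 with h | h | h
    · exfalso
      have hrow : Y.rowLen b.1 ≤ Y.rowLen (a.1 + 1) := Y.rowLen_anti _ _ h
      have hb' : b.2 < Y.rowLen b.1 := YoungDiagram.mem_iff_lt_rowLen.1 hb0
      have ha' : ¬ a.2 < Y.rowLen (a.1 + 1) := fun hh =>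
        ha1 (YoungDiagram.mem_iff_lt_rowLen.2 hh)
      omega
    · exact Prod.ext h h2
    · exfalso
      have hrow : Y.rowLen a.1 ≤ Y.rowLen (b.1 + 1) := Y.rowLen_anti _ _ h
      have ha' : a.2 < Y.rowLen a.1 := YoungDiagram.mem_iff_lt_rowLen.1 ha0
      have hb' : ¬ b.2 < Y.rowLen (b.1 + 1) := fun hh =>
        hb1 (YoungDiagram.mem_iff_lt_rowLen.2 hh)
      omega
  · intro L hL
    rw [List.mem_toFinset] at hL
    have hLpos : 0 < L := Y.pos_of_mem_rowLens L hL
    rw [YoungDiagram.rowLens, List.mem_map] at hL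
    obtain ⟨i0, hi0, hrow⟩ := hL
    rw [List.mem_range] at hi0
    set K := Y.colLen (L - 1) with hK
    have hi0K : i0 < K := by
      rw [hK, ← YoungDiagram.mem_iff_lt_colLen, YoungDiagram.mem_iff_lt_rowLen, hrow]; omega
    have hcl : Y.colLen L ≤ i0 := by
      by_contra hcon
      push_neg at hcon
      rw [← YoungDiagram.mem_iff_lt_colLen, YoungDiagram.mem_iff_lt_rowLen, hrow] at hcon
      omega
    refine ⟨(K - 1, L - 1), ?_, by simp; omega⟩
    rw [mem_remCells]
    refine ⟨?_, ?_, ?_⟩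
    · show (K - 1, L - 1) ∈ Y
      rw [YoungDiagram.mem_iff_lt_colLen, ← hK]; omega
    · show (K - 1 + 1, L - 1) ∈ Y → False
      rw [YoungDiagram.mem_iff_lt_colLen, ← hK]; omega
    · show (K - 1, L - 1 + 1) ∈ Y → False
      have hL1 : L - 1 + 1 = L := by omega
      rw [hL1, YoungDiagram.mem_iff_lt_colLen]
      omega


lemma ofRowLens_congr {w w' : List ℕ} (hw : w.SortedGE) (hw' : w'.SortedGE)
    (h : w = w') : YoungDiagram.ofRowLens w hw = YoungDiagram.ofRowLens w' hw' := by
  subst h; rfl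

/-- The parts multiset of a Young diagram. -/
def toPart {m : ℕ} (Y : {Y : YoungDiagram // Y.card = m}) : Nat.Partition m where
  parts := ↑Y.1.rowLens
  parts_pos := fun hi => Y.1.pos_of_mem_rowLens _ (Multiset.mem_coe.1 hi)
  parts_sum := by
    rw [Multiset.sum_coe, ← card_eq_sum_rowLens', Y.2]

def fromPart {m : ℕ} (p : Nat.Partition m) : {Y : YoungDiagram // Y.card = m} :=
  ⟨YoungDiagram.ofRowLens (p.parts.sort (· ≥ ·)) ((p.parts.pairwise_sort _).sortedGE), by
    have hpos : ∀ x ∈ p.parts.sort (· ≥ ·), 0 < x := fun x hx =>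
      p.parts_pos (by rwa [Multiset.mem_sort] at hx)
    rw [card_eq_sum_rowLens', YoungDiagram.rowLens_ofRowLens_eq_self hpos,
      ← Multiset.sum_coe, Multiset.sort_eq]
    exact p.parts_sum⟩

lemma parts_fromPart {m : ℕ} (p : Nat.Partition m) :
    (↑(fromPart p).1.rowLens : Multiset ℕ) = p.parts := by
  have hpos : ∀ x ∈ p.parts.sort (· ≥ ·), 0 < x := fun x hx =>
    p.parts_pos (by rwa [Multiset.mem_sort] at hx)
  rw [fromPart, YoungDiagram.rowLens_ofRowLens_eq_self hpos, Multiset.sort_eq]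

def partEquiv (m : ℕ) : {Y : YoungDiagram // Y.card = m} ≃ Nat.Partition m where
  toFun := toPart
  invFun := fromPart
  left_inv Y := by
    apply Subtype.ext
    have hs : (Multiset.sort (↑Y.1.rowLens : Multiset ℕ) (· ≥ ·)) = Y.1.rowLens := by
      refine List.Perm.eq_of_sortedGE ((Multiset.pairwise_sort _ _).sortedGE) Y.1.rowLens_sorted ?_
      exact Multiset.coe_eq_coe.1 (Multiset.sort_eq _ _)
    calc (fromPart (toPart Y)).1
        = YoungDiagram.ofRowLens Y.1.rowLens Y.1.rowLens_sorted :=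
          ofRowLens_congr ((Multiset.pairwise_sort _ _).sortedGE) Y.1.rowLens_sorted hs
      _ = Y.1 := YoungDiagram.ofRowLens_to_rowLens_eq_self
  right_inv p := Nat.Partition.ext (parts_fromPart p)

noncomputable instance (m : ℕ) : Fintype {Y : YoungDiagram // Y.card = m} :=
  Fintype.ofEquiv _ (partEquiv m).symm

lemma removableCount_fromPart {m : ℕ} (p : Nat.Partition m) :
    removableCount (fromPart p).1 = p.parts.toFinset.card := by
  rw [removableCount_eq, ← parts_fromPart p, ← List.toFinset_coe]

lemma ell_fromPart {m : ℕ} (p : Nat.Partition m) :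
    ell (fromPart p).1 = Multiset.card p.parts := by
  rw [ell_eq, ← YoungDiagram.length_rowLens, ← Multiset.coe_card, parts_fromPart p]

lemma card_lt_pairs (S : Finset ℕ) :
    ((S ×ˢ S).filter fun q => q.2 < q.1).card = S.card.choose 2 := by
  have hswap : ((S ×ˢ S).filter fun q => q.2 < q.1).card
      = ((S ×ˢ S).filter fun q => q.1 < q.2).card := by
    apply Finset.card_bij (fun q _ => Prod.swap q)
    · intro q hq
      simp only [Finset.mem_filter, Finset.mem_product] at hq ⊢
      exact ⟨⟨hq.1.2, hq.1.1⟩, hq.2⟩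
    · intro a _ b _ hab
      exact Prod.swap_injective hab
    · intro q hq
      simp only [Finset.mem_filter, Finset.mem_product] at hq
      refine ⟨q.swap, ?_, by simp⟩
      simp only [Finset.mem_filter, Finset.mem_product, Prod.fst_swap, Prod.snd_swap]
      exact ⟨⟨hq.1.2, hq.1.1⟩, hq.2⟩
  have hunion : ((S ×ˢ S).filter fun q => q.2 < q.1) ∪ ((S ×ˢ S).filter fun q => q.1 < q.2)
      = S.offDiag := by
    ext q
    simp only [Finset.mem_union, Finset.mem_filter, Finset.mem_product, Finset.mem_offDiag]
    constructor
    · rintro (⟨⟨h1, h2⟩, h3⟩ | ⟨⟨h1, h2⟩, h3⟩)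
      · exact ⟨h1, h2, by omega⟩
      · exact ⟨h1, h2, by omega⟩
    · rintro ⟨h1, h2, h3⟩
      rcases Nat.lt_or_ge q.2 q.1 with h | h
      · exact Or.inl ⟨⟨h1, h2⟩, h⟩
      · refine Or.inr ⟨⟨h1, h2⟩, ?_⟩
        rcases Nat.lt_or_ge q.1 q.2 with h' | h'
        · exact h'
        · exact absurd (Prod.ext (by omega) rfl : q = (q.2, q.2)) (by
            intro hh
            exact h3 (by omega))
    
  have hdisj : Disjoint ((S ×ˢ S).filter fun q => q.2 < q.1)
      ((S ×ˢ S).filter fun q => q.1 < q.2) := by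
    refine Finset.disjoint_left.2 fun q hq1 hq2 => ?_
    simp only [Finset.mem_filter] at hq1 hq2
    omega
  have hcard := Finset.card_union_of_disjoint hdisj
  rw [hunion, Finset.offDiag_card, ← hswap] at hcard
  have hmul : S.card * (S.card - 1) = S.card * S.card - S.card := by
    cases S.card with
    | zero => simp
    | succ k => simp only [Nat.succ_sub_one, Nat.mul_succ, Nat.succ_mul]; omega
  rw [Nat.choose_two_right]
  omega


lemma sigma_src_ext {m : ℕ} (x y : Σ _ : Nat.Partition m, ℕ × ℕ)
    (h1 : x.1.parts = y.1.parts) (h2 : x.2 = y.2) : x = y := by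
  obtain ⟨px, qx⟩ := x
  obtain ⟨py, qy⟩ := y
  cases Nat.Partition.ext h1
  cases h2
  rfl

lemma sigma_tgt_ext {n : ℕ} (x y : Σ pr : ℕ × ℕ, Nat.Partition (n - pr.1 - 2 * pr.2))
    (h1 : x.1 = y.1) (h2 : x.2.parts = y.2.parts) : x = y := by
  obtain ⟨px, qx⟩ := x
  obtain ⟨py, qy⟩ := y
  cases h1
  cases Nat.Partition.ext h2
  rfl

end S17

open S17 Finset in
set_option maxHeartbeats 2000000 in
/-- `Σ_{Y ⊢ n+3} C(d(Y),2)·q^{(n+2)−ℓ(Y)} = f_n(q)`. -/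
theorem statement17 (n : ℕ) :
    (∑ᶠ Y : {Y : YoungDiagram // Y.card = n + 3},
        ((removableCount Y.1).choose 2 : Polynomial ℤ)
          * (X : Polynomial ℤ) ^ ((n + 2) - ell Y.1))
      = fPoly n := by
  classical
  rw [finsum_eq_sum_of_fintype]
  rw [← Equiv.sum_comp (partEquiv (n + 3)).symm
      (fun Y => ((removableCount Y.1).choose 2 : Polynomial ℤ)
        * (X : Polynomial ℤ) ^ ((n + 2) - ell Y.1))]
  have hterm : ∀ p : Nat.Partition (n + 3),
      ((removableCount ((partEquiv (n + 3)).symm p).1).choose 2 : Polynomial ℤ)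
        * (X : Polynomial ℤ) ^ ((n + 2) - ell ((partEquiv (n + 3)).symm p).1)
      = ∑ _q ∈ (p.parts.toFinset ×ˢ p.parts.toFinset).filter (fun q => q.2 < q.1),
          (X : Polynomial ℤ) ^ ((n + 2) - Multiset.card p.parts) := by
    intro p
    have h1 : removableCount ((partEquiv (n + 3)).symm p).1 = p.parts.toFinset.card :=
      removableCount_fromPart p
    have h2 : ell ((partEquiv (n + 3)).symm p).1 = Multiset.card p.parts :=
      ell_fromPart p
    rw [h1, h2, Finset.sum_const, card_lt_pairs, nsmul_eq_mul]
  rw [Finset.sum_congr rfl fun p _ => hterm p, Finset.sum_sigma']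
  rw [fPoly]
  have decode_src : ∀ {x : Σ _ : Nat.Partition (n + 3), ℕ × ℕ},
      x ∈ (Finset.univ.sigma fun p : Nat.Partition (n + 3) =>
        (p.parts.toFinset ×ˢ p.parts.toFinset).filter fun q => q.2 < q.1) →
      x.2.1 ∈ x.1.parts ∧ x.2.2 ∈ x.1.parts ∧ x.2.2 < x.2.1 := by
    intro x hx
    simp only [Finset.mem_sigma, Finset.mem_univ, true_and, Finset.mem_filter,
      Finset.mem_product, Multiset.mem_toFinset] at hx
    exact ⟨hx.1.1, hx.1.2, hx.2⟩
  refine Eq.trans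
    (Finset.sum_bij'
      (i := fun x hx =>
        ⟨(x.2.1 - x.2.2 - 1, x.2.2 - 1),
         ⟨(x.1.parts.erase x.2.1).erase x.2.2,
          fun hi => x.1.parts_pos (Multiset.mem_of_mem_erase (Multiset.mem_of_mem_erase hi)),
          by
            obtain ⟨hs, ht, hlt⟩ := decode_src hx
            have htmem : x.2.2 ∈ x.1.parts.erase x.2.1 :=
              (Multiset.mem_erase_of_ne (by omega)).2 ht
            have e1 : x.2.1 + (x.1.parts.erase x.2.1).sum = n + 3 := by
              rw [← Multiset.sum_cons, Multiset.cons_erase hs, x.1.parts_sum]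
            have e2 : x.2.2 + ((x.1.parts.erase x.2.1).erase x.2.2).sum
                = (x.1.parts.erase x.2.1).sum := by
              rw [← Multiset.sum_cons, Multiset.cons_erase htmem]
            have hpt : 0 < x.2.2 := x.1.parts_pos ht
            omega⟩⟩)
      (j := fun y hy =>
        ⟨⟨(y.1.1 + y.1.2 + 2) ::ₘ (y.1.2 + 1) ::ₘ y.2.parts,
          by
            intro i hi
            rcases Multiset.mem_cons.1 hi with rfl | hi
            · omega
            rcases Multiset.mem_cons.1 hi with rfl | hi
            · omega
            · exact y.2.parts_pos hi,
          by
            simp only [Finset.mem_sigma, Finset.mem_filter, Finset.mem_product,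
              Finset.mem_range, Finset.mem_univ, and_true] at hy
            rw [Multiset.sum_cons, Multiset.sum_cons, y.2.parts_sum]
            omega⟩,
         (y.1.1 + y.1.2 + 2, y.1.2 + 1)⟩)
      ?_ ?_ ?_ ?_ ?_)
    (Finset.sum_sigma
      (((Finset.range (n + 1)) ×ˢ (Finset.range (n + 1))).filter
        (fun p => p.1 + 2 * p.2 ≤ n))
      (fun _ => Finset.univ)
      (fun x : Σ pr : ℕ × ℕ, Nat.Partition (n - pr.1 - 2 * pr.2) =>
        (X : Polynomial ℤ) ^ (n - Multiset.card x.2.parts)))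
  · -- hi
    intro x hx
    obtain ⟨hs, ht, hlt⟩ := decode_src hx
    have htmem : x.2.2 ∈ x.1.parts.erase x.2.1 := (Multiset.mem_erase_of_ne (by omega)).2 ht
    have e1 : x.2.1 + (x.1.parts.erase x.2.1).sum = n + 3 := by
      rw [← Multiset.sum_cons, Multiset.cons_erase hs, x.1.parts_sum]
    have e2 : x.2.2 + ((x.1.parts.erase x.2.1).erase x.2.2).sum
        = (x.1.parts.erase x.2.1).sum := by
      rw [← Multiset.sum_cons, Multiset.cons_erase htmem]
    have hpt : 0 < x.2.2 := x.1.parts_pos ht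
    simp only [Finset.mem_sigma, Finset.mem_filter, Finset.mem_product, Finset.mem_range,
      Finset.mem_univ, and_true]
    omega
  · -- hj
    intro y hy
    simp only [Finset.mem_sigma, Finset.mem_univ, true_and, Finset.mem_filter,
      Finset.mem_product, Multiset.mem_toFinset]
    refine ⟨⟨Multiset.mem_cons_self _ _, ?_⟩, by omega⟩
    exact Multiset.mem_cons.2 (Or.inr (Multiset.mem_cons_self _ _))
  · -- left_inv
    intro x hx
    obtain ⟨hs, ht, hlt⟩ := decode_src hx
    have hpt : 0 < x.2.2 := x.1.parts_pos ht
    have htmem : x.2.2 ∈ x.1.parts.erase x.2.1 := (Multiset.mem_erase_of_ne (by omega)).2 ht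
    apply sigma_src_ext
    · show (x.2.1 - x.2.2 - 1 + (x.2.2 - 1) + 2) ::ₘ (x.2.2 - 1 + 1) ::ₘ
          (x.1.parts.erase x.2.1).erase x.2.2 = x.1.parts
      rw [show x.2.1 - x.2.2 - 1 + (x.2.2 - 1) + 2 = x.2.1 by omega,
        show x.2.2 - 1 + 1 = x.2.2 by omega,
        Multiset.cons_erase htmem, Multiset.cons_erase hs]
    · show (x.2.1 - x.2.2 - 1 + (x.2.2 - 1) + 2, x.2.2 - 1 + 1) = x.2
      rw [show x.2.1 - x.2.2 - 1 + (x.2.2 - 1) + 2 = x.2.1 by omega,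
        show x.2.2 - 1 + 1 = x.2.2 by omega]
  · -- right_inv
    intro y hy
    apply sigma_tgt_ext
    · show (y.1.1 + y.1.2 + 2 - (y.1.2 + 1) - 1, y.1.2 + 1 - 1) = y.1
      have h1 : y.1.1 + y.1.2 + 2 - (y.1.2 + 1) - 1 = y.1.1 := by omega
      have h2 : y.1.2 + 1 - 1 = y.1.2 := by omega
      rw [h1, h2]
    · show ((((y.1.1 + y.1.2 + 2) ::ₘ (y.1.2 + 1) ::ₘ y.2.parts).erase
          (y.1.1 + y.1.2 + 2)).erase (y.1.2 + 1)) = y.2.parts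
      rw [Multiset.erase_cons_head, Multiset.erase_cons_head]
  · -- h
    intro x hx
    obtain ⟨hs, ht, hlt⟩ := decode_src hx
    have htmem : x.2.2 ∈ x.1.parts.erase x.2.1 := (Multiset.mem_erase_of_ne (by omega)).2 ht
    have c1 : Multiset.card (x.1.parts.erase x.2.1) = Multiset.card x.1.parts - 1 :=
      Multiset.card_erase_of_mem hs
    have c2 : Multiset.card ((x.1.parts.erase x.2.1).erase x.2.2)
        = Multiset.card (x.1.parts.erase x.2.1) - 1 :=
      Multiset.card_erase_of_mem htmem
    have hpos : 0 < Multiset.card (x.1.parts.erase x.2.1) := by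
      rw [Multiset.card_pos]
      intro h0
      rw [h0] at htmem
      exact absurd htmem (Multiset.notMem_zero _)
    show (X : Polynomial ℤ) ^ (n + 2 - Multiset.card x.1.parts)
        = (X : Polynomial ℤ) ^ (n - Multiset.card ((x.1.parts.erase x.2.1).erase x.2.2))
    congr 1
    omega
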